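/- For any real m×n matrix A and any μ > 0, ‖(A Aᵀ + μ I)⁻¹ A‖ ≤ 1/(2√μ). -/

import Mathlib

set_option maxHeartbeats 1000000


/-- For any real m×n matrix `A` (as a continuous linear map between Euclidean
spaces) and `μ > 0`, `‖(A Aᵀ + μ I)⁻¹ A‖ ≤ 1/(2√μ)`, where the inverse is
expressed via any two-sided inverse `B` of `A Aᵀ + μ I`. -/
theorem inv_comp_norm_le (m n : ℕ)
    (A : EuclideanSpace ℝ (Fin n) →L[ℝ] EuclideanSpace ℝ (Fin m))
    (μ : ℝ) (hμ : 0 < μ)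
    (B : EuclideanSpace ℝ (Fin m) →L[ℝ] EuclideanSpace ℝ (Fin m))
    (hB₁ : (A.comp (ContinuousLinearMap.adjoint A) + μ • ContinuousLinearMap.id ℝ _).comp B =
      ContinuousLinearMap.id ℝ _)
    (hB₂ : B.comp (A.comp (ContinuousLinearMap.adjoint A) + μ • ContinuousLinearMap.id ℝ _) =
      ContinuousLinearMap.id ℝ _) :
    ‖B.comp A‖ ≤ 1 / (2 * Real.sqrt μ) := by
  set T : EuclideanSpace ℝ (Fin m) →L[ℝ] EuclideanSpace ℝ (Fin m) :=
    A.comp (ContinuousLinearMap.adjoint A) + μ • ContinuousLinearMap.id ℝ _ with hT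
  -- T is self-adjoint
  have hTsa : ContinuousLinearMap.adjoint T = T := by
    rw [hT, map_add, map_smul, ContinuousLinearMap.adjoint_comp,
      ContinuousLinearMap.adjoint_adjoint, ContinuousLinearMap.adjoint_id]
  -- B is self-adjoint
  have hBsa : ContinuousLinearMap.adjoint B = B := by
    have h := congrArg (ContinuousLinearMap.adjoint) hB₂
    rw [ContinuousLinearMap.adjoint_comp, hTsa, ContinuousLinearMap.adjoint_id] at h
    calc ContinuousLinearMap.adjoint B
        = (B.comp T).comp (ContinuousLinearMap.adjoint B) := by
          rw [hB₂, ContinuousLinearMap.id_comp]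
      _ = B.comp (T.comp (ContinuousLinearMap.adjoint B)) := by
          rw [ContinuousLinearMap.comp_assoc]
      _ = B := by rw [h, ContinuousLinearMap.comp_id]
  set C : EuclideanSpace ℝ (Fin m) →L[ℝ] EuclideanSpace ℝ (Fin n) :=
    (ContinuousLinearMap.adjoint A).comp B with hC
  have hsq : Real.sqrt μ * Real.sqrt μ = μ := Real.mul_self_sqrt hμ.le
  have hs : 0 < Real.sqrt μ := Real.sqrt_pos.mpr hμ
  have hCle : ‖C‖ ≤ 1 / (2 * Real.sqrt μ) := by
    apply ContinuousLinearMap.opNorm_le_bound _ (by positivity)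
    intro x
    have hx : A ((ContinuousLinearMap.adjoint A) (B x)) = x - μ • (B x) := by
      have := congrFun (congrArg (DFunLike.coe) hB₁) x
      simp [hT, ContinuousLinearMap.comp_apply, ContinuousLinearMap.add_apply] at this
      rw [eq_sub_iff_add_eq]
      simpa using this
    have hsq2 : ‖C x‖ ^ 2 ≤ ‖x‖ ^ 2 / (4 * μ) := by
      have h1 : ‖C x‖ ^ 2 = (inner ℝ (B x) x : ℝ) - μ * ‖B x‖ ^ 2 := by
        have : (‖C x‖ : ℝ) ^ 2 = inner ℝ (C x) (C x) := (real_inner_self_eq_norm_sq _).symm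
        rw [this, hC]
        simp only [ContinuousLinearMap.comp_apply]
        rw [ContinuousLinearMap.adjoint_inner_left, hx]
        rw [inner_sub_right, real_inner_smul_right, real_inner_self_eq_norm_sq,
          real_inner_comm]
      have h2 : (inner ℝ (B x) x : ℝ) ≤ ‖B x‖ * ‖x‖ := real_inner_le_norm _ _
      rw [le_div_iff₀ (by positivity)]
      nlinarith [sq_nonneg (‖x‖ - 2 * μ * ‖B x‖),
        mul_le_mul_of_nonneg_left h2 (show (0:ℝ) ≤ 4 * μ by positivity)]
    have h3 : ‖C x‖ ^ 2 * (4 * μ) ≤ ‖x‖ ^ 2 :=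
      (le_div_iff₀ (by positivity)).mp hsq2
    have h4 : (‖C x‖ * (2 * Real.sqrt μ)) ^ 2 ≤ ‖x‖ ^ 2 := by nlinarith
    have h5 : ‖C x‖ * (2 * Real.sqrt μ) ≤ ‖x‖ := by
      have := Real.sqrt_le_sqrt h4
      rwa [Real.sqrt_sq (by positivity), Real.sqrt_sq (norm_nonneg x)] at this
    have heq : 1 / (2 * Real.sqrt μ) * ‖x‖ = ‖x‖ / (2 * Real.sqrt μ) := by ring
    rw [heq, le_div_iff₀ (by positivity)]
    exact h5
  have hBA : B.comp A = ContinuousLinearMap.adjoint C := by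
    rw [hC, ContinuousLinearMap.adjoint_comp, hBsa, ContinuousLinearMap.adjoint_adjoint]
  rw [hBA]
  exact le_trans (le_of_eq (ContinuousLinearMap.adjoint.norm_map C)) hCle
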